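/- Up to interchanging adjacent commuting reflections (2-term braid moves), there is a unique sequence of indices (j'_1, …, j'_{2n−4}) = (n−2, n−1, n−3, n−2, …, 1, 2) from I = {1,…,n} such that applying the lowering operators f̃_{j'_{2n−4}} ⋯ f̃_{j'_1} to the spin crystal element (+,…,+,−,−) yields (−,−,+,…,+). -/

import Mathlib

/-- The lowering operator `f̃_i` on the spin crystal of type `D_n` realized on `{+,-}^n`. -/
def spinF (n : ℕ) (i : Fin n) (τ : Fin n → Bool) : Option (Fin n → Bool) :=
  if h : (i : ℕ) + 1 < n then
    if τ i = true ∧ τ ⟨(i : ℕ) + 1, h⟩ = false then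
      some (Function.update (Function.update τ i false) ⟨(i : ℕ) + 1, h⟩ true)
    else none
  else
    if τ ⟨n - 2, Nat.sub_lt i.pos (by norm_num)⟩ = true ∧
       τ ⟨n - 1, Nat.sub_lt i.pos (by norm_num)⟩ = true then
      some (Function.update
        (Function.update τ ⟨n - 2, Nat.sub_lt i.pos (by norm_num)⟩ false)
        ⟨n - 1, Nat.sub_lt i.pos (by norm_num)⟩ false)
    else none

/-- Apply a sequence of lowering operators. -/
def applySeq (n : ℕ) (L : List (Fin n)) (τ : Fin n → Bool) : Option (Fin n → Bool) :=
  L.foldl (fun o i => o.bind (spinF n i)) (some τ)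

/-- Adjacency in the Dynkin diagram of type `D_n` (0-indexed: a chain `0 — 1 — ⋯ — (n-2)`
with the node `n-1` attached to `n-3`). -/
def DynkinAdj (n : ℕ) (i j : Fin n) : Prop :=
  ((i : ℕ) ≠ n - 1 ∧ (j : ℕ) ≠ n - 1 ∧ ((i : ℕ) + 1 = j ∨ (j : ℕ) + 1 = i)) ∨
  ((i : ℕ) = n - 1 ∧ (j : ℕ) = n - 3) ∨ ((i : ℕ) = n - 3 ∧ (j : ℕ) = n - 1)

/-- A 2-term braid move: interchange two adjacent entries whose nodes commute
(are not adjacent in the Dynkin diagram). -/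
inductive Swap2 (n : ℕ) : List (Fin n) → List (Fin n) → Prop
  | mk (L1 L2 : List (Fin n)) (i j : Fin n) (h : ¬ DynkinAdj n i j) :
      Swap2 n (L1 ++ i :: j :: L2) (L1 ++ j :: i :: L2)

-- my auxiliaries
def sig (n a b : ℕ) : Fin n → Bool := fun i => decide ((i : ℕ) ≠ a ∧ (i : ℕ) ≠ b)

def fc (n : ℕ) (τ : Fin n → Bool) : ℕ := ∑ j : Fin n, (if τ j = false then 1 else 0)

lemma applySeq_nil (n : ℕ) (τ : Fin n → Bool) : applySeq n [] τ = some τ := rfl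

lemma applySeq_none (n : ℕ) (L : List (Fin n)) :
    L.foldl (fun o i => o.bind (spinF n i)) none = none := by
  induction L with
  | nil => rfl
  | cons i L ih => simpa [List.foldl] using ih

lemma applySeq_cons (n : ℕ) (i : Fin n) (L : List (Fin n)) (τ τ' : Fin n → Bool)
    (h : applySeq n (i :: L) τ = some τ') :
    ∃ σ', spinF n i τ = some σ' ∧ applySeq n L σ' = some τ' := by
  unfold applySeq at h ⊢
  rw [List.foldl_cons] at h
  cases hs : spinF n i τ with
  | none =>
      rw [show ((some τ).bind (spinF n i)) = none by simp [hs]] at h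
      rw [applySeq_none] at h; exact absurd h (by simp)
  | some σ' =>
      refine ⟨σ', rfl, ?_⟩
      rwa [show ((some τ).bind (spinF n i)) = some σ' by simp [hs]] at h

lemma applySeq_cons' (n : ℕ) (i : Fin n) (L : List (Fin n)) (τ σ' : Fin n → Bool)
    (h : spinF n i τ = some σ') :
    applySeq n (i :: L) τ = applySeq n L σ' := by
  unfold applySeq
  simp [List.foldl, h]

lemma fc_update (n : ℕ) (f : Fin n → Bool) (x : Fin n) (v : Bool) :
    fc n (Function.update f x v) + (if f x = false then 1 else 0)
      = fc n f + (if v = false then 1 else 0) := by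
  unfold fc
  have h1 : (fun j => if Function.update f x v j = false then 1 else 0)
      = Function.update (fun j => if f j = false then (1:ℕ) else 0) x (if v = false then 1 else 0) := by
    funext j
    by_cases hj : j = x <;> simp [Function.update_apply, hj]
  rw [show (∑ j : Fin n, (if Function.update f x v j = false then 1 else 0))
      = ∑ j : Fin n, Function.update (fun j => if f j = false then (1:ℕ) else 0) x
        (if v = false then 1 else 0) j from by rw [← h1]]
  rw [Finset.sum_update_of_mem (Finset.mem_univ x)]
  rw [← Finset.add_sum_erase Finset.univ _ (Finset.mem_univ x), Finset.erase_eq]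
  omega

lemma fc_top (n : ℕ) : fc n (fun _ => true) = 0 := by simp [fc]

lemma sig_as_update (n a b : ℕ) (hab : a < b) (hbn : b < n) :
    sig n a b = Function.update (Function.update (fun _ => true) ⟨a, by omega⟩ false)
      ⟨b, by omega⟩ false := by
  funext j
  simp only [sig, Function.update_apply, Fin.ext_iff]
  split_ifs <;> simp <;> omega

lemma fc_sig (n a b : ℕ) (hab : a < b) (hbn : b < n) : fc n (sig n a b) = 2 := by
  rw [sig_as_update n a b hab hbn]
  have h1 := fc_update n (fun _ => true) ⟨a, by omega⟩ false
  have h2 := fc_update n (Function.update (fun _ => true) (⟨a, by omega⟩ : Fin n) false)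
      ⟨b, by omega⟩ false
  rw [fc_top] at h1
  simp only [if_pos rfl] at h1 h2
  have hne : ((⟨b, by omega⟩ : Fin n)) ≠ ⟨a, by omega⟩ := by
    simp [Fin.ext_iff]; omega
  rw [Function.update_apply, if_neg hne] at h2
  simp at h1 h2
  omega

lemma stepA (n a b : ℕ) (ha : 1 ≤ a) (hab : a < b) (hbn : b < n) :
    spinF n ⟨a - 1, by omega⟩ (sig n a b) = some (sig n (a-1) b) := by
  unfold spinF
  rw [dif_pos (show a - 1 + 1 < n by omega)]
  have hcond : sig n a b ⟨a-1, by omega⟩ = true ∧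
      sig n a b ⟨a-1+1, by omega⟩ = false := by
    constructor <;> simp [sig] <;> omega
  rw [if_pos hcond]
  congr 1
  funext j
  rw [Bool.eq_iff_iff]
  simp only [Function.update_apply, Fin.ext_iff, sig, decide_eq_true_eq]
  split_ifs <;> simp <;> omega

lemma stepB (n a b : ℕ) (hab : a + 1 < b) (hbn : b < n) :
    spinF n ⟨b - 1, by omega⟩ (sig n a b) = some (sig n a (b-1)) := by
  unfold spinF
  rw [dif_pos (show b - 1 + 1 < n by omega)]
  have hcond : sig n a b ⟨b-1, by omega⟩ = true ∧
      sig n a b ⟨b-1+1, by omega⟩ = false := by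
    constructor <;> simp [sig] <;> omega
  rw [if_pos hcond]
  congr 1
  funext j
  rw [Bool.eq_iff_iff]
  simp only [Function.update_apply, Fin.ext_iff, sig, decide_eq_true_eq]
  split_ifs <;> simp <;> omega

lemma fc_mono (n : ℕ) (hn : 2 ≤ n) (i : Fin n) (τ τ' : Fin n → Bool)
    (h : spinF n i τ = some τ') : fc n τ ≤ fc n τ' := by
  unfold spinF at h
  by_cases hi : (i : ℕ) + 1 < n
  · rw [dif_pos hi] at h
    by_cases hc : τ i = true ∧ τ ⟨(i:ℕ)+1, hi⟩ = false
    · rw [if_pos hc] at h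
      obtain ⟨h1, h2⟩ := hc
      have hτ' : τ' = Function.update (Function.update τ i false) ⟨(i:ℕ)+1, hi⟩ true := by
        exact (Option.some_injective _ h).symm
      have e1 := fc_update n τ i false
      have e2 := fc_update n (Function.update τ i false) ⟨(i:ℕ)+1, hi⟩ true
      rw [h1] at e1
      have hne : ((⟨(i:ℕ)+1, hi⟩ : Fin n)) ≠ i := by simp [Fin.ext_iff]
      rw [Function.update_apply, if_neg hne, h2] at e2
      simp at e1 e2
      rw [hτ']
      omega
    · rw [if_neg hc] at h; exact absurd h (by simp)
  · rw [dif_neg hi] at h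
    by_cases hc : τ ⟨n - 2, Nat.sub_lt i.pos (by norm_num)⟩ = true ∧
        τ ⟨n - 1, Nat.sub_lt i.pos (by norm_num)⟩ = true
    · rw [if_pos hc] at h
      obtain ⟨h1, h2⟩ := hc
      have hτ' : τ' = Function.update
          (Function.update τ ⟨n - 2, Nat.sub_lt i.pos (by norm_num)⟩ false)
          ⟨n - 1, Nat.sub_lt i.pos (by norm_num)⟩ false :=
        (Option.some_injective _ h).symm
      have e1 := fc_update n τ ⟨n - 2, Nat.sub_lt i.pos (by norm_num)⟩ false
      have e2 := fc_update n (Function.update τ ⟨n - 2, Nat.sub_lt i.pos (by norm_num)⟩ false)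
          ⟨n - 1, Nat.sub_lt i.pos (by norm_num)⟩ false
      rw [h1] at e1
      have hne : ((⟨n-1, Nat.sub_lt i.pos (by norm_num)⟩ : Fin n)) ≠
          ⟨n - 2, Nat.sub_lt i.pos (by norm_num)⟩ := by simp [Fin.ext_iff]; omega
      rw [Function.update_apply, if_neg hne, h2] at e2
      simp at e1 e2
      rw [hτ']
      omega
    · rw [if_neg hc] at h; exact absurd h (by simp)

lemma seq_mono (n : ℕ) (hn : 2 ≤ n) (L : List (Fin n)) (τ τ' : Fin n → Bool)
    (h : applySeq n L τ = some τ') : fc n τ ≤ fc n τ' := by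
  induction L generalizing τ with
  | nil => rw [applySeq_nil] at h; cases h; rfl
  | cons i L ih =>
      obtain ⟨σ', hs, hrest⟩ := applySeq_cons n i L τ τ' h
      exact le_trans (fc_mono n hn i τ σ' hs) (ih σ' hrest)

lemma stepChar (n : ℕ) (hn : 4 ≤ n) (a b : ℕ) (hab : a < b) (hbn : b < n)
    (i : Fin n) (τ' : Fin n → Bool) (h : spinF n i (sig n a b) = some τ') :
    (1 ≤ a ∧ (i:ℕ) = a - 1 ∧ τ' = sig n (a-1) b) ∨
    (a + 1 < b ∧ (i:ℕ) = b - 1 ∧ τ' = sig n a (b-1)) ∨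
    fc n τ' = 4 := by
  by_cases hi : (i : ℕ) + 1 < n
  · rw [spinF, dif_pos hi] at h
    by_cases hc : sig n a b i = true ∧ sig n a b ⟨(i:ℕ)+1, hi⟩ = false
    · rw [if_pos hc] at h
      have h1 := hc.1
      have h2 := hc.2
      simp only [sig, decide_eq_true_eq, decide_eq_false_iff_not, not_and, not_not] at h1 h2
      by_cases hA : (i:ℕ) + 1 = a
      · left
        have ha : 1 ≤ a := by omega
        have hiv : (i:ℕ) = a - 1 := by omega
        have := stepA n a b ha hab hbn
        have hieq : i = ⟨a - 1, by omega⟩ := by simp [Fin.ext_iff, hiv]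
        rw [← hieq] at this
        rw [spinF, dif_pos hi, if_pos hc] at this
        rw [h] at this
        exact ⟨ha, hiv, (Option.some_injective _ this)⟩
      · have hB : (i:ℕ) + 1 = b := by
          rcases Decidable.em ((i:ℕ) + 1 = b) with hb | hb
          · exact hb
          · exfalso
            rcases Decidable.em ((i:ℕ)+1 ≠ a) with h' | h'
            · exact hb (h2 h')
            · exact hA (not_not.mp h')
        right; left
        have hab1 : a + 1 < b := by
          have : (i:ℕ) ≠ a := h1.1
          omega
        have hiv : (i:ℕ) = b - 1 := by omega
        have := stepB n a b hab1 hbn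
        have hieq : i = ⟨b - 1, by omega⟩ := by simp [Fin.ext_iff, hiv]
        rw [← hieq] at this
        rw [spinF, dif_pos hi, if_pos hc] at this
        rw [h] at this
        exact ⟨hab1, hiv, (Option.some_injective _ this)⟩
    · rw [if_neg hc] at h; exact absurd h (by simp)
  · rw [spinF, dif_neg hi] at h
    by_cases hc : sig n a b ⟨n - 2, Nat.sub_lt i.pos (by norm_num)⟩ = true ∧
        sig n a b ⟨n - 1, Nat.sub_lt i.pos (by norm_num)⟩ = true
    · right; right
      obtain ⟨h1, h2⟩ := hc
      rw [if_pos ⟨h1, h2⟩] at h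
      have hτ' : τ' = Function.update
          (Function.update (sig n a b) ⟨n - 2, Nat.sub_lt i.pos (by norm_num)⟩ false)
          ⟨n - 1, Nat.sub_lt i.pos (by norm_num)⟩ false :=
        (Option.some_injective _ h).symm
      have e1 := fc_update n (sig n a b) ⟨n - 2, Nat.sub_lt i.pos (by norm_num)⟩ false
      have e2 := fc_update n
          (Function.update (sig n a b) ⟨n - 2, Nat.sub_lt i.pos (by norm_num)⟩ false)
          ⟨n - 1, Nat.sub_lt i.pos (by norm_num)⟩ false
      rw [h1] at e1
      have hne : ((⟨n-1, Nat.sub_lt i.pos (by norm_num)⟩ : Fin n)) ≠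
          ⟨n - 2, Nat.sub_lt i.pos (by norm_num)⟩ := by simp [Fin.ext_iff]; omega
      rw [Function.update_apply, if_neg hne, h2] at e2
      rw [fc_sig n a b hab hbn] at e1
      simp at e1 e2
      rw [hτ']
      omega
    · rw [if_neg hc] at h; exact absurd h (by simp)

def canonN : ℕ → ℕ → List ℕ
  | a, b => if a + 1 < b then (b-1) :: canonN a (b-1)
            else if 1 ≤ a then (a-1) :: canonN (a-1) b else []
  termination_by a b => a + b
  decreasing_by all_goals omega

lemma canonN_B (a b : ℕ) (h : a + 1 < b) : canonN a b = (b-1) :: canonN a (b-1) := by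
  rw [canonN]; rw [if_pos h]

lemma canonN_A (a b : ℕ) (h : ¬ a + 1 < b) (ha : 1 ≤ a) :
    canonN a b = (a-1) :: canonN (a-1) b := by
  rw [canonN]; rw [if_neg h, if_pos ha]

lemma canonN_nil : canonN 0 1 = [] := by rw [canonN]; norm_num

lemma canonN_chain (k : ℕ) :
    canonN k (k+1) = (List.range k).reverse.flatMap (fun j => [j, j+1]) := by
  induction k with
  | zero => rw [canonN]; norm_num
  | succ k ih =>
      rw [canonN_A (k+1) (k+2) (by omega) (by omega)]
      norm_num
      rw [canonN_B k (k+2) (by omega)]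
      norm_num
      rw [ih]
      rw [List.range_succ]
      simp

def fnn (n : ℕ) (h : 0 < n) (m : ℕ) : Fin n := ⟨m % n, Nat.mod_lt m h⟩

lemma fnn_eq (n : ℕ) (h : 0 < n) (m : ℕ) (hm : m < n) (p : m < n) :
    fnn n h m = ⟨m, p⟩ := by
  simp [fnn, Fin.ext_iff, Nat.mod_eq_of_lt hm]

lemma four_pos_aux (n : ℕ) (hn : 4 ≤ n) : 0 < n := by omega

lemma canon_works (n : ℕ) (hn : 4 ≤ n) : ∀ s a b : ℕ, a + b ≤ s → a < b → b < n →
    applySeq n ((canonN a b).map (fnn n (four_pos_aux n hn))) (sig n a b) = some (sig n 0 1) := by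
  intro s
  induction s with
  | zero => intro a b h1 h2 h3; omega
  | succ s ih =>
      intro a b h1 hab hbn
      by_cases hB : a + 1 < b
      · rw [canonN_B a b hB, List.map_cons]
        rw [applySeq_cons' n _ _ _ (sig n a (b-1)) ?_]
        · exact ih a (b-1) (by omega) (by omega) (by omega)
        · rw [fnn_eq n (by omega) (b-1) (by omega) (by omega)]
          exact stepB n a b hB hbn
      · by_cases ha : 1 ≤ a
        · rw [canonN_A a b hB ha, List.map_cons]
          rw [applySeq_cons' n _ _ _ (sig n (a-1) b) ?_]
          · exact ih (a-1) b (by omega) (by omega) (by omega)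
          · rw [fnn_eq n (by omega) (a-1) (by omega) (by omega)]
            exact stepA n a b ha hab hbn
        · have ha0 : a = 0 := by omega
          have hb1 : b = 1 := by omega
          subst ha0; subst hb1
          rw [canonN_nil]
          exact applySeq_nil n _

lemma eqv_cons (n : ℕ) (x : Fin n) {L M : List (Fin n)}
    (h : Relation.EqvGen (Swap2 n) L M) :
    Relation.EqvGen (Swap2 n) (x :: L) (x :: M) := by
  induction h with
  | rel a b hab =>
      apply Relation.EqvGen.rel
      obtain ⟨L1, L2, i, j, hn⟩ := hab
      have := Swap2.mk (n := n) (x :: L1) L2 i j hn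
      simpa using this
  | refl a => exact Relation.EqvGen.refl _
  | symm a b _ ih => exact ih.symm
  | trans a b c _ _ ih1 ih2 => exact ih1.trans _ _ _ ih2

lemma sig_inj (n : ℕ) (hn : 4 ≤ n) (a b : ℕ) (hab : a < b) (hbn : b < n)
    (h : sig n a b = sig n 0 1) : a = 0 ∧ b = 1 := by
  have h0 := congrFun h ⟨0, by omega⟩
  have h1 := congrFun h ⟨1, by omega⟩
  simp only [sig, decide_eq_decide] at h0 h1
  simp at h0 h1
  omega

lemma not_adj (n : ℕ) (hn : 4 ≤ n) (u v : ℕ) (hu : u < n - 1) (hv : v < n - 1)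
    (h : u + 2 ≤ v) : ¬ DynkinAdj n (fnn n (four_pos_aux n hn) u) (fnn n (four_pos_aux n hn) v) := by
  have hu' : (fnn n (by omega : 0 < n) u : ℕ) = u := Nat.mod_eq_of_lt (by omega)
  have hv' : (fnn n (by omega : 0 < n) v : ℕ) = v := Nat.mod_eq_of_lt (by omega)
  unfold DynkinAdj
  rw [hu', hv']
  omega

lemma extract (n : ℕ) (hn : 4 ≤ n) : ∀ s : ℕ, ∀ L : List (Fin n), ∀ a b : ℕ,
    L.length ≤ s → a + 1 < b → b < n →
    applySeq n L (sig n a b) = some (sig n 0 1) →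
    ∃ M : List (Fin n), applySeq n M (sig n a (b-1)) = some (sig n 0 1) ∧
      M.length + 1 = L.length ∧
      Relation.EqvGen (Swap2 n) L (fnn n (four_pos_aux n hn) (b-1) :: M) := by
  intro s
  induction s with
  | zero =>
      intro L a b hs hab hbn h
      have : L = [] := by cases L <;> simp_all
      subst this
      rw [applySeq_nil] at h
      have := sig_inj n hn a b (by omega) hbn (Option.some_injective _ h)
      omega
  | succ s ih =>
      intro L a b hs hab hbn h
      cases L with
      | nil =>
          rw [applySeq_nil] at h
          have := sig_inj n hn a b (by omega) hbn (Option.some_injective _ h)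
          omega
      | cons i L' =>
          obtain ⟨σ', hstep, hrest⟩ := applySeq_cons n i L' _ _ h
          rcases stepChar n hn a b (by omega) hbn i σ' hstep with
            ⟨ha1, hiv, hσ⟩ | ⟨_, hiv, hσ⟩ | hfc
          · -- A move first
            subst hσ
            obtain ⟨M, hM, hlen, hequiv⟩ := ih L' (a-1) b (by simp at hs; omega) (by omega) hbn hrest
            refine ⟨fnn n (by omega) (a-1) :: M, ?_, by simp [← hlen], ?_⟩
            · rw [applySeq_cons' n _ _ _ (sig n (a-1) (b-1)) ?_]
              · exact hM
              · rw [fnn_eq n (by omega) (a-1) (by omega) (by omega)]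
                exact stepA n a (b-1) ha1 (by omega) (by omega)
            · have hieq : i = fnn n (by omega) (a-1) := by
                rw [fnn_eq n (by omega) (a-1) (by omega) (by omega)]
                simp [Fin.ext_iff, hiv]
              have step1 : Relation.EqvGen (Swap2 n) (i :: L')
                  (i :: (fnn n (by omega) (b-1) :: M)) := eqv_cons n i hequiv
              have step2 : Relation.EqvGen (Swap2 n)
                  (i :: (fnn n (by omega) (b-1) :: M))
                  (fnn n (by omega) (b-1) :: fnn n (by omega) (a-1) :: M) := by
                rw [hieq]
                apply Relation.EqvGen.rel
                have hnadj := not_adj n hn (a-1) (b-1) (by omega) (by omega) (by omega)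
                have := Swap2.mk (n := n) [] M (fnn n (by omega) (a-1))
                  (fnn n (by omega) (b-1)) hnadj
                simpa using this
              exact step1.trans _ _ _ step2
          · -- B move first
            subst hσ
            refine ⟨L', hrest, by simp, ?_⟩
            have hieq : i = fnn n (by omega) (b-1) := by
              rw [fnn_eq n (by omega) (b-1) (by omega) (by omega)]
              simp [Fin.ext_iff, hiv]
            rw [hieq]
            exact Relation.EqvGen.refl _
          · -- spin move: impossible
            exfalso
            have hmono := seq_mono n (by omega) L' σ' _ hrest
            rw [hfc, fc_sig n 0 1 (by omega) (by omega)] at hmono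
            omega

lemma main_uniq (n : ℕ) (hn : 4 ≤ n) : ∀ s : ℕ, ∀ L : List (Fin n), ∀ a b : ℕ,
    L.length ≤ s → a < b → b < n →
    applySeq n L (sig n a b) = some (sig n 0 1) →
    Relation.EqvGen (Swap2 n) L ((canonN a b).map (fnn n (four_pos_aux n hn))) := by
  intro s
  induction s with
  | zero =>
      intro L a b hs hab hbn h
      have hL : L = [] := by cases L <;> simp_all
      subst hL
      rw [applySeq_nil] at h
      obtain ⟨ha, hb⟩ := sig_inj n hn a b hab hbn (Option.some_injective _ h)
      subst ha; subst hb
      rw [canonN_nil]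
      exact Relation.EqvGen.refl _
  | succ s ih =>
      intro L a b hs hab hbn h
      by_cases hB : a + 1 < b
      · obtain ⟨M, hM, hlen, hequiv⟩ := extract n hn (s+1) L a b hs hB hbn h
        have hMlen : M.length ≤ s := by omega
        have ihM := ih M a (b-1) hMlen (by omega) (by omega) hM
        rw [canonN_B a b hB, List.map_cons]
        exact hequiv.trans _ _ _ (eqv_cons n _ ihM)
      · by_cases ha : 1 ≤ a
        · -- b = a + 1, only A move possible
          cases L with
          | nil =>
              rw [applySeq_nil] at h
              have := sig_inj n hn a b hab hbn (Option.some_injective _ h)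
              omega
          | cons i L' =>
              obtain ⟨σ', hstep, hrest⟩ := applySeq_cons n i L' _ _ h
              rcases stepChar n hn a b hab hbn i σ' hstep with
                ⟨_, hiv, hσ⟩ | ⟨hb', _, _⟩ | hfc
              · subst hσ
                have ihL' := ih L' (a-1) b (by simp at hs; omega) (by omega) hbn hrest
                rw [canonN_A a b hB ha, List.map_cons]
                have hieq : i = fnn n (by omega) (a-1) := by
                  rw [fnn_eq n (by omega) (a-1) (by omega) (by omega)]
                  simp [Fin.ext_iff, hiv]
                rw [hieq]
                exact eqv_cons n _ ihL'
              · omega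
              · exfalso
                have hmono := seq_mono n (by omega) L' σ' _ hrest
                rw [hfc, fc_sig n 0 1 (by omega) (by omega)] at hmono
                omega
        · -- a = 0, b = 1 : L must be empty
          have ha0 : a = 0 := by omega
          have hb1 : b = 1 := by omega
          subst ha0; subst hb1
          cases L with
          | nil =>
              rw [canonN_nil]
              exact Relation.EqvGen.refl _
          | cons i L' =>
              exfalso
              obtain ⟨σ', hstep, hrest⟩ := applySeq_cons n i L' _ _ h
              rcases stepChar n hn 0 1 (by omega) (by omega) i σ' hstep with
                ⟨h1, _, _⟩ | ⟨h1, _, _⟩ | hfc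
              · omega
              · omega
              · have hmono := seq_mono n (by omega) L' σ' _ hrest
                rw [hfc, fc_sig n 0 1 (by omega) (by omega)] at hmono
                omega


/-- Up to 2-term braid moves, the sequence `(n-2, n-1, n-3, n-2, …, 1, 2)` (1-indexed;
0-indexed `(n-3, n-2, n-4, n-3, …, 0, 1)`) is the unique sequence of indices whose
lowering operators take `(+,…,+,-,-)` to `(-,-,+,…,+)` in the spin crystal. -/
theorem stmt6 (n : ℕ) (hn : 4 ≤ n) :
    let τ0 : Fin n → Bool := fun i => decide ((i : ℕ) < n - 2)
    let τ1 : Fin n → Bool := fun i => decide (2 ≤ (i : ℕ))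
    let L0 : List (Fin n) :=
      ((List.range (n - 2)).reverse.flatMap (fun k => [k, k + 1])).map
        (fun m => (⟨m % n, Nat.mod_lt m (by omega)⟩ : Fin n))
    applySeq n L0 τ0 = some τ1 ∧
    ∀ L : List (Fin n), applySeq n L τ0 = some τ1 → Relation.EqvGen (Swap2 n) L L0 := by
  intro τ0 τ1 L0
  have hτ0 : τ0 = sig n (n-2) (n-1) := by
    funext i
    simp only [τ0, sig, decide_eq_decide]
    have := i.isLt
    omega
  have hτ1 : τ1 = sig n 0 1 := by
    funext i
    simp only [τ1, sig, decide_eq_decide]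
    omega
  have hL0 : L0 = (canonN (n-2) (n-1)).map (fnn n (by omega)) := by
    have hc := canonN_chain (n-2)
    rw [show n - 2 + 1 = n - 1 by omega] at hc
    rw [hc]
    rfl
  constructor
  · rw [hτ0, hτ1, hL0]
    exact canon_works n hn ((n-2)+(n-1)) (n-2) (n-1) le_rfl (by omega) (by omega)
  · intro L hL
    rw [hτ0, hτ1] at hL
    rw [hL0]
    exact main_uniq n hn L.length L (n-2) (n-1) le_rfl (by omega) (by omega) hL
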